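/- Let λ₂ > λ₁ > 0. The function Tᵘ(q₁) = (−(16λ₂² + 16λ₁λ₂)(q₁² + 4) + 32λ₁²q₁²) / ((q₁² + 4)²((λ₁ − λ₂)q₁² − 4λ₁ − 4λ₂)) is a solution on [0, ∞) of the Riccati equation λ₁ q₁ (Tᵘ)' + (1/16)(4 + q₁²)² (Tᵘ)² = (16/(4 + q₁²)²)(λ₂² − 4λ₁²q₁²/(4 + q₁²)), with Tᵘ(0) = λ₂. -/

import Mathlib

theorem stmt_12 (l1 l2 : ℝ) (h1 : 0 < l1) (h12 : l1 < l2)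
    (Tu : ℝ → ℝ)
    (hTu : ∀ q, Tu q = (-(16 * l2 ^ 2 + 16 * l1 * l2) * (q ^ 2 + 4) + 32 * l1 ^ 2 * q ^ 2)
      / ((q ^ 2 + 4) ^ 2 * ((l1 - l2) * q ^ 2 - 4 * l1 - 4 * l2))) :
    Tu 0 = l2 ∧
      ∀ q ∈ Set.Ici (0 : ℝ),
        l1 * q * deriv Tu q + (1 / 16) * (4 + q ^ 2) ^ 2 * Tu q ^ 2
          = (16 / (4 + q ^ 2) ^ 2) * (l2 ^ 2 - 4 * l1 ^ 2 * q ^ 2 / (4 + q ^ 2)) := by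
  have hgne : ∀ q : ℝ, (q ^ 2 + 4) ^ 2 * ((l1 - l2) * q ^ 2 - 4 * l1 - 4 * l2) ≠ 0 := by
    intro q
    have h4 : (0:ℝ) < q ^ 2 + 4 := by positivity
    have hneg : (l1 - l2) * q ^ 2 - 4 * l1 - 4 * l2 < 0 := by nlinarith [sq_nonneg q]
    exact mul_ne_zero (by positivity) (ne_of_lt hneg)
  constructor
  · rw [hTu 0, div_eq_iff (hgne 0)]
    ring
  · intro q _
    have hq2 : HasDerivAt (fun x : ℝ => x ^ 2) (2 * q) q := by
      simpa using hasDerivAt_pow 2 q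
    have hnum : HasDerivAt
        (fun x : ℝ => -(16 * l2 ^ 2 + 16 * l1 * l2) * (x ^ 2 + 4) + 32 * l1 ^ 2 * x ^ 2)
        (-(16 * l2 ^ 2 + 16 * l1 * l2) * (2 * q) + 32 * l1 ^ 2 * (2 * q)) q :=
      ((hq2.add_const 4).const_mul _).add (hq2.const_mul _)
    have hden : HasDerivAt
        (fun x : ℝ => (x ^ 2 + 4) ^ 2 * ((l1 - l2) * x ^ 2 - 4 * l1 - 4 * l2))
        ((2 * (q ^ 2 + 4) * (2 * q)) * ((l1 - l2) * q ^ 2 - 4 * l1 - 4 * l2)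
          + (q ^ 2 + 4) ^ 2 * ((l1 - l2) * (2 * q))) q := by
      have hp : HasDerivAt (fun x : ℝ => (x ^ 2 + 4) ^ 2) (2 * (q ^ 2 + 4) * (2 * q)) q := by
        simpa using (hq2.add_const 4).fun_pow 2
      have hl : HasDerivAt (fun x : ℝ => (l1 - l2) * x ^ 2 - 4 * l1 - 4 * l2)
          ((l1 - l2) * (2 * q)) q := ((hq2.const_mul _).sub_const _).sub_const _
      exact hp.mul hl
    have hTuEq : Tu = fun x : ℝ =>
        (-(16 * l2 ^ 2 + 16 * l1 * l2) * (x ^ 2 + 4) + 32 * l1 ^ 2 * x ^ 2)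
          / ((x ^ 2 + 4) ^ 2 * ((l1 - l2) * x ^ 2 - 4 * l1 - 4 * l2)) := funext hTu
    have hD : HasDerivAt Tu
        (((-(16 * l2 ^ 2 + 16 * l1 * l2) * (2 * q) + 32 * l1 ^ 2 * (2 * q))
            * ((q ^ 2 + 4) ^ 2 * ((l1 - l2) * q ^ 2 - 4 * l1 - 4 * l2))
          - (-(16 * l2 ^ 2 + 16 * l1 * l2) * (q ^ 2 + 4) + 32 * l1 ^ 2 * q ^ 2)
            * ((2 * (q ^ 2 + 4) * (2 * q)) * ((l1 - l2) * q ^ 2 - 4 * l1 - 4 * l2)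
              + (q ^ 2 + 4) ^ 2 * ((l1 - l2) * (2 * q))))
          / ((q ^ 2 + 4) ^ 2 * ((l1 - l2) * q ^ 2 - 4 * l1 - 4 * l2)) ^ 2) q := by
      rw [hTuEq]
      exact hnum.div hden (hgne q)
    rw [hD.deriv, hTu q]
    have hneg : (l1 - l2) * q ^ 2 - 4 * l1 - 4 * l2 ≠ 0 := by
      have : (l1 - l2) * q ^ 2 - 4 * l1 - 4 * l2 < 0 := by nlinarith [sq_nonneg q]
      exact ne_of_lt this
    have h4q : (4 + q ^ 2) ≠ 0 := by positivity
    have h4q' : (q ^ 2 + 4) ≠ 0 := by positivity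
    have hneg' : q ^ 2 * (l1 - l2) - l1 * 4 - l2 * 4 ≠ 0 := by
      intro h; apply hneg; linarith
    field_simp
    ring
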